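/- Let $\kk$ be a field of characteristic $p > 0$, $G$ a finite $p$-group acting linearly on $V$ with dual basis $x_0, \ldots, x_n$ of $V^*$ in which $x_0$ is terminal, and let $d = \deg(x_0)$ be the minimal positive $x_0$-degree of an invariant monic in $x_0$. Let $\mathcal{H} = \kk[V]^G_+ \kk[V]$ be the Hilbert ideal. Then $\Delta^j(\mathcal{H}) \subseteq \mathcal{H}$ for all $0 \le j < d$, where $\Delta^j$ is the $j$-th Hasse derivative with respect to $x_0$. -/

import Mathlib

open Polynomial in
theorem aux_hasseDeriv_map {R S : Type*} [CommSemiring R] [CommSemiring S]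
    (σ : R →+* S) (l : ℕ) (f : R[X]) :
    hasseDeriv l (f.map σ) = (hasseDeriv l f).map σ := by
  ext i
  simp [hasseDeriv_coeff, coeff_map]

open Polynomial in
theorem aux_hasseDeriv_X_add_C_pow {R : Type*} [CommRing R] (a : R) (m l : ℕ) :
    hasseDeriv l ((X + C a) ^ m) = C (m.choose l : R) * (X + C a) ^ (m - l) := by
  ext i
  rw [hasseDeriv_coeff, coeff_C_mul, coeff_X_add_C_pow, coeff_X_add_C_pow]
  have hexp : m - (i + l) = m - l - i := by omega
  rw [hexp]
  by_cases hil : i + l ≤ m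
  · have h1 : m.choose (i + l) * (i + l).choose l = m.choose l * ((m - l).choose (i + l - l)) :=
      Nat.choose_mul (Nat.le_add_left l i)
    rw [Nat.add_sub_cancel] at h1
    have h2 := congrArg (Nat.cast : ℕ → R) h1
    push_cast at h2
    linear_combination a ^ (m - l - i) * h2
  · rcases le_or_gt l m with hlm | hlm
    · simp [Nat.choose_eq_zero_of_lt (show m < i + l by omega),
        Nat.choose_eq_zero_of_lt (show m - l < i by omega)]
    · simp [Nat.choose_eq_zero_of_lt (show m < i + l by omega),
        Nat.choose_eq_zero_of_lt hlm]

open Polynomial in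
theorem aux_hasseDeriv_comp {R : Type*} [CommRing R] (a : R) (l : ℕ) (f : R[X]) :
    hasseDeriv l (f.comp (X + C a)) = (hasseDeriv l f).comp (X + C a) := by
  induction f using Polynomial.induction_on' with
  | add p q hp hq => simp [add_comp, map_add, hp, hq]
  | monomial m r =>
      rw [hasseDeriv_monomial]
      simp only [← C_mul_X_pow_eq_monomial, mul_comp, C_comp, X_pow_comp]
      rw [← smul_eq_C_mul, map_smul, aux_hasseDeriv_X_add_C_pow, smul_eq_C_mul, C_mul]
      ring

open Polynomial MvPolynomial in
theorem aux_action_form {k : Type*} [Field k] {n : ℕ}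
    (e : Polynomial (MvPolynomial (Fin n) k) ≃ₐ[k] Polynomial (MvPolynomial (Fin n) k))
    (hterm : ∀ j : Fin n, ∃ ℓ : MvPolynomial (Fin n) k,
      ℓ.IsHomogeneous 1 ∧ e (Polynomial.C (MvPolynomial.X j)) = Polynomial.C ℓ)
    (hX : ∃ ℓ : MvPolynomial (Fin n) k,
      ℓ.IsHomogeneous 1 ∧ e Polynomial.X = Polynomial.X + Polynomial.C ℓ) :
    ∃ (σ : MvPolynomial (Fin n) k →+* MvPolynomial (Fin n) k)
      (ℓ : MvPolynomial (Fin n) k),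
      ∀ f, e f = (f.map σ).comp (Polynomial.X + Polynomial.C ℓ) := by
  obtain ⟨ℓ, _, hℓ⟩ := hX
  set v : Fin n → MvPolynomial (Fin n) k := fun i => (hterm i).choose with hv
  have hC : ∀ r, e (Polynomial.C r) = Polynomial.C (MvPolynomial.aeval v r) := by
    intro r
    have h1 : (e.toAlgHom.comp (IsScalarTower.toAlgHom k (MvPolynomial (Fin n) k)
          (Polynomial (MvPolynomial (Fin n) k)))) =
        (IsScalarTower.toAlgHom k (MvPolynomial (Fin n) k)
          (Polynomial (MvPolynomial (Fin n) k))).comp (MvPolynomial.aeval v) := by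
      apply MvPolynomial.algHom_ext
      intro i
      simp only [AlgHom.coe_comp, Function.comp_apply, IsScalarTower.coe_toAlgHom',
        Polynomial.algebraMap_eq, AlgEquiv.toAlgHom_eq_coe, AlgHom.coe_coe, MvPolynomial.aeval_X]
      exact (hterm i).choose_spec.2
    have := congrFun (congrArg (fun (φ : _ →ₐ[k] _) => (φ : _ → _)) h1) r
    simpa [Polynomial.algebraMap_eq] using this
  refine ⟨(MvPolynomial.aeval v : MvPolynomial (Fin n) k →ₐ[k] MvPolynomial (Fin n) k).toRingHom,
    ℓ, ?_⟩
  have key : (e.toAlgHom.toRingHom : Polynomial (MvPolynomial (Fin n) k) →+*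
      Polynomial (MvPolynomial (Fin n) k)) =
      Polynomial.eval₂RingHom (Polynomial.C.comp
        (MvPolynomial.aeval v : MvPolynomial (Fin n) k →ₐ[k]
          MvPolynomial (Fin n) k).toRingHom) (Polynomial.X + Polynomial.C ℓ) := by
    apply Polynomial.ringHom_ext
    · intro a
      simpa using hC a
    · simpa using hℓ
  intro f
  have h2 := congrFun (congrArg (fun (φ : _ →+* _) => (φ : _ → _)) key) f
  simp only [AlgEquiv.toAlgHom_eq_coe, AlgHom.toRingHom_eq_coe, RingHom.coe_coe, AlgHom.coe_coe,
    coe_eval₂RingHom] at h2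
  rw [show e f = _ from h2, Polynomial.comp, Polynomial.eval₂_map]
  rfl

theorem aux_degree_cons {n : ℕ} (i : ℕ) (m : Fin n →₀ ℕ) :
    (m.cons i).degree = i + m.degree := by
  have huniv : ∀ {N : ℕ} (d : Fin N →₀ ℕ), d.degree = ∑ x : Fin N, d x := by
    intro N d
    have : d.degree = ∑ x ∈ d.support, d x := rfl
    rw [this]
    refine Finset.sum_subset (Finset.subset_univ d.support) ?_
    intro x _ hx
    exact Finsupp.notMem_support_iff.mp hx
  rw [huniv, huniv, Fin.sum_univ_succ]
  simp [Finsupp.cons_zero, Finsupp.cons_succ]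

open Polynomial MvPolynomial in
theorem aux_crux {k : Type*} [Field k] {n : ℕ} {G : Type*} [Group G]
    (ρ : G →* (Polynomial (MvPolynomial (Fin n) k) ≃ₐ[k] Polynomial (MvPolynomial (Fin n) k)))
    (hterm : ∀ (g : G) (j : Fin n), ∃ ℓ : MvPolynomial (Fin n) k,
      ℓ.IsHomogeneous 1 ∧ ρ g (Polynomial.C (MvPolynomial.X j)) = Polynomial.C ℓ)
    (hX : ∀ g : G, ∃ ℓ : MvPolynomial (Fin n) k,
      ℓ.IsHomogeneous 1 ∧ ρ g Polynomial.X = Polynomial.X + Polynomial.C ℓ)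
    (f : Polynomial (MvPolynomial (Fin n) k)) (hf : ∀ g, ρ g f = f) (j : ℕ)
    (hc : MvPolynomial.constantCoeff (f.coeff j) ≠ 0) :
    ∃ F : Polynomial (MvPolynomial (Fin n) k),
      (∀ g, ρ g F = F) ∧ F.Monic ∧ F.natDegree = j := by
  classical
  set E := MvPolynomial.finSuccEquiv k n with hE
  set m₀ := E.symm f with hm₀
  set h := homogeneousComponent j m₀ with hh
  set c := MvPolynomial.constantCoeff (f.coeff j) with hcdef
  have hEm₀ : E m₀ = f := E.apply_symm_apply f
  -- E.symm of constants
  have hEsymmC : ∀ r : MvPolynomial (Fin n) k,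
      E.symm (Polynomial.C r) = rename Fin.succ r := by
    intro r
    have h1 : E.toAlgHom.comp (rename (Fin.succ) :
          MvPolynomial (Fin n) k →ₐ[k] MvPolynomial (Fin (n + 1)) k) =
        IsScalarTower.toAlgHom k (MvPolynomial (Fin n) k)
          (Polynomial (MvPolynomial (Fin n) k)) := by
      apply MvPolynomial.algHom_ext
      intro i
      simp only [AlgHom.coe_comp, Function.comp_apply, AlgEquiv.toAlgHom_eq_coe, AlgHom.coe_coe,
        IsScalarTower.coe_toAlgHom', Polynomial.algebraMap_eq, rename_X]
      exact finSuccEquiv_X_succ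
    have h2 := congrFun (congrArg (fun (φ : _ →ₐ[k] _) => (φ : _ → _)) h1) r
    simp only [AlgHom.coe_comp, Function.comp_apply, AlgEquiv.toAlgHom_eq_coe, AlgHom.coe_coe,
      IsScalarTower.coe_toAlgHom', Polynomial.algebraMap_eq] at h2
    rw [← h2]; exact E.symm_apply_apply _
  -- homogeneity preservation
  have hpres : ∀ (g : G) (D : ℕ) (q : MvPolynomial (Fin (n + 1)) k), q.IsHomogeneous D →
      (E.symm (ρ g (E q))).IsHomogeneous D := by
    intro g D q hq
    set ψ : MvPolynomial (Fin (n + 1)) k →ₐ[k] MvPolynomial (Fin (n + 1)) k :=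
      (E.symm.toAlgHom.comp ((ρ g).toAlgHom.comp E.toAlgHom)) with hψ
    have hψapp : ∀ q', ψ q' = E.symm (ρ g (E q')) := by intro q'; simp [hψ]
    have hψX : ∀ i : Fin (n + 1), (ψ (MvPolynomial.X i)).IsHomogeneous 1 := by
      intro i
      induction i using Fin.cases with
      | zero =>
          rw [hψapp, finSuccEquiv_X_zero, (hX g).choose_spec.2, map_add, hEsymmC,
            show E.symm Polynomial.X = MvPolynomial.X 0 by
              rw [← finSuccEquiv_X_zero (R := k) (n := n), E.symm_apply_apply]]
          exact (isHomogeneous_X k 0).add ((hX g).choose_spec.1.rename_isHomogeneous)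
      | succ i =>
          rw [hψapp, finSuccEquiv_X_succ, (hterm g i).choose_spec.2, hEsymmC]
          exact (hterm g i).choose_spec.1.rename_isHomogeneous
    have hψeq : ψ = MvPolynomial.aeval (fun i => ψ (MvPolynomial.X i)) := by
      apply MvPolynomial.algHom_ext
      intro i
      simp
    have hres : (ψ q).IsHomogeneous (1 * D) := by
      rw [hψeq]
      exact hq.aeval _ hψX
    rw [← hψapp]
    simpa using hres
  -- invariance of E h
  have hFinv : ∀ g, ρ g (E h) = E h := by
    intro g
    by_cases hjd : j ≤ m₀.totalDegree
    · have hTm : E.symm (ρ g (E m₀)) = m₀ := by rw [hEm₀, hf g, hm₀]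
      have expand : m₀ = ∑ i ∈ Finset.range (m₀.totalDegree + 1),
          E.symm (ρ g (E (homogeneousComponent i m₀))) := by
        conv_lhs => rw [← hTm]
        conv_lhs => rw [← MvPolynomial.sum_homogeneousComponent m₀]
        rw [map_sum, map_sum, map_sum]
      have happ := congrArg (homogeneousComponent j) expand
      rw [map_sum] at happ
      rw [Finset.sum_congr rfl (fun i _ => homogeneousComponent_of_mem
        ((mem_homogeneousSubmodule _ _).mpr
          (hpres g i _ (homogeneousComponent_isHomogeneous i m₀))))] at happ
      rw [Finset.sum_ite_eq (Finset.range (m₀.totalDegree + 1)) j] at happ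
      rw [if_pos (Finset.mem_range.mpr (by omega))] at happ
      have : E h = ρ g (E h) := by
        conv_lhs => rw [hh, happ]
        rw [E.apply_symm_apply]
      exact this.symm
    · have hz : h = 0 := homogeneousComponent_eq_zero _ _ (by omega)
      rw [hz]
      simp
  have hhom : h.IsHomogeneous j := homogeneousComponent_isHomogeneous j m₀
  have hco : ∀ (i : ℕ) (m' : Fin n →₀ ℕ),
      MvPolynomial.coeff m' ((E h).coeff i) = MvPolynomial.coeff (m'.cons i) h :=
    fun i m' => finSuccEquiv_coeff_coeff m' h i
  have hdeg : ∀ (dd : Fin (n + 1) →₀ ℕ), MvPolynomial.coeff dd h ≠ 0 → dd.degree = j := by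
    intro dd hdd
    rw [Finsupp.degree_eq_weight_one]
    exact hhom hdd
  have hcoeff_hi : ∀ i, j < i → (E h).coeff i = 0 := by
    intro i hi
    ext m'
    rw [hco, MvPolynomial.coeff_zero]
    by_contra hne
    have h1 := hdeg _ hne
    rw [aux_degree_cons] at h1
    omega
  have hc' : MvPolynomial.coeff (Finsupp.cons j (0 : Fin n →₀ ℕ)) h = c := by
    rw [hh, coeff_homogeneousComponent, if_pos (by rw [aux_degree_cons]; simp)]
    have := hco j (0 : Fin n →₀ ℕ)
    have h2 : MvPolynomial.coeff (0 : Fin n →₀ ℕ) ((E m₀).coeff j) =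
        MvPolynomial.coeff (Finsupp.cons j (0 : Fin n →₀ ℕ)) m₀ :=
      finSuccEquiv_coeff_coeff 0 m₀ j
    rw [hEm₀] at h2
    rw [← h2, hcdef]
    rfl
  have hcoeffj : (E h).coeff j = MvPolynomial.C c := by
    ext m'
    rw [hco]
    by_cases hm : m' = 0
    · subst hm
      rw [hc']
      simp
    · rw [MvPolynomial.coeff_C, if_neg (fun hh' => hm hh'.symm)]
      by_contra hne
      have h1 := hdeg _ hne
      rw [aux_degree_cons] at h1
      exact hm (Finsupp.degree_eq_zero_iff m' |>.mp (by omega))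
  refine ⟨(c⁻¹ : k) • E h, ?_, ?_, ?_⟩
  · intro g
    rw [Algebra.smul_def, map_mul, AlgEquiv.commutes, hFinv g, ← Algebra.smul_def]
  · apply Polynomial.monic_of_natDegree_le_of_coeff_eq_one j
    · rw [Polynomial.natDegree_le_iff_coeff_eq_zero]
      intro i hi
      rw [Polynomial.coeff_smul, hcoeff_hi i hi, smul_zero]
    · rw [Polynomial.coeff_smul, hcoeffj, Algebra.smul_def, MvPolynomial.algebraMap_eq,
        ← MvPolynomial.C_mul, inv_mul_cancel₀ hc, MvPolynomial.C_1]
  · refine le_antisymm ?_ ?_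
    · rw [Polynomial.natDegree_le_iff_coeff_eq_zero]
      intro i hi
      rw [Polynomial.coeff_smul, hcoeff_hi i hi, smul_zero]
    · apply Polynomial.le_natDegree_of_ne_zero
      rw [Polynomial.coeff_smul, hcoeffj, Algebra.smul_def, MvPolynomial.algebraMap_eq,
        ← MvPolynomial.C_mul, inv_mul_cancel₀ hc, MvPolynomial.C_1]
      exact one_ne_zero



/-- For a finite `p`-group `G` acting linearly with terminal variable `x₀` of degree `d`,
the Hasse derivatives `Δ^j` for `j < d` preserve the Hilbert ideal
`H = k[V]^G_+ · k[V]` (the ideal generated by invariants of positive degree, equivalently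
by invariants with zero constant term). -/
theorem hasseDeriv_preserves_hilbert_ideal {p : ℕ} (hp : p.Prime) (k : Type*) [Field k]
    [CharP k p] (G : Type*) [Group G] [Finite G] (hG : IsPGroup p G) (n : ℕ)
    (ρ : G →* (Polynomial (MvPolynomial (Fin n) k) ≃ₐ[k] Polynomial (MvPolynomial (Fin n) k)))
    (hterm : ∀ (g : G) (j : Fin n), ∃ ℓ : MvPolynomial (Fin n) k,
      ℓ.IsHomogeneous 1 ∧ ρ g (Polynomial.C (MvPolynomial.X j)) = Polynomial.C ℓ)
    (hX : ∀ g : G, ∃ ℓ : MvPolynomial (Fin n) k,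
      ℓ.IsHomogeneous 1 ∧ ρ g Polynomial.X = Polynomial.X + Polynomial.C ℓ)
    (d : ℕ) (hd0 : 0 < d)
    (hdex : ∃ f : Polynomial (MvPolynomial (Fin n) k),
      (∀ g : G, ρ g f = f) ∧ f.Monic ∧ f.natDegree = d)
    (hdmin : ∀ e : ℕ, 0 < e → (∃ f : Polynomial (MvPolynomial (Fin n) k),
      (∀ g : G, ρ g f = f) ∧ f.Monic ∧ f.natDegree = e) → d ≤ e)
    -- the Hilbert ideal
    (H : Ideal (Polynomial (MvPolynomial (Fin n) k)))
    (hH : H = Ideal.span {f : Polynomial (MvPolynomial (Fin n) k) |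
      (∀ g : G, ρ g f = f) ∧ MvPolynomial.constantCoeff (f.coeff 0) = 0}) :
    ∀ j : ℕ, j < d → ∀ f ∈ H, Polynomial.hasseDeriv j f ∈ H := by
  classical
  subst hH
  set S : Set (Polynomial (MvPolynomial (Fin n) k)) :=
    {f : Polynomial (MvPolynomial (Fin n) k) |
      (∀ g : G, ρ g f = f) ∧ MvPolynomial.constantCoeff (f.coeff 0) = 0} with hS
  intro j hjd f hfH
  have hcomm : ∀ (g : G) (l : ℕ) (q : Polynomial (MvPolynomial (Fin n) k)),
      ρ g (Polynomial.hasseDeriv l q) = Polynomial.hasseDeriv l (ρ g q) := by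
    intro g l q
    obtain ⟨σ, ℓ, hform⟩ := aux_action_form (ρ g) (hterm g) (hX g)
    rw [hform, hform, aux_hasseDeriv_comp, aux_hasseDeriv_map]
  have hgen : ∀ s ∈ S, ∀ l, l < d → Polynomial.hasseDeriv l s ∈ S := by
    intro s hs l hld
    refine ⟨fun g => by rw [hcomm, hs.1], ?_⟩
    rw [show (Polynomial.hasseDeriv l s).coeff 0 = s.coeff l by
      rw [Polynomial.hasseDeriv_coeff]; simp]
    by_cases hl0 : l = 0
    · subst hl0; exact hs.2
    · by_contra hne
      obtain ⟨F, hF1, hF2, hF3⟩ := aux_crux ρ hterm hX s hs.1 l hne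
      have := hdmin l (Nat.pos_of_ne_zero hl0) ⟨F, hF1, hF2, hF3⟩
      omega
  have main : ∀ l, l < d → Polynomial.hasseDeriv l f ∈ Ideal.span S := by
    refine Submodule.span_induction
      (p := fun x _ => ∀ l, l < d → Polynomial.hasseDeriv l x ∈ Ideal.span S)
      ?_ ?_ ?_ ?_ hfH
    · exact fun x hx l hld => Ideal.subset_span (hgen x hx l hld)
    · intro l _
      rw [map_zero]
      exact Submodule.zero_mem _
    · intro x y _ _ ihx ihy l hld
      rw [map_add]
      exact Submodule.add_mem _ (ihx l hld) (ihy l hld)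
    · intro a x _ ih l hld
      rw [smul_eq_mul, Polynomial.hasseDeriv_mul]
      refine Submodule.sum_mem _ ?_
      intro ij hij
      have hij' := Finset.HasAntidiagonal.mem_antidiagonal.mp hij
      exact Ideal.mul_mem_left _ _ (ih ij.2 (by omega))
  exact main j hjd
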